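/- Let K be a field, E a graph, v, w ∈ E^0, and e_1, …, e_n distinct edges with s(e_i) = v, r(e_i) = w. If P = (p_{ij}) ∈ GL_n(wL_K(E)_0 w), i.e., P is invertible over the corner of the degree-zero component, with P^{-1} = (p'_{ij}), then there exists a unique graded K-algebra homomorphism φ_P : L_K(E) → L_K(E) satisfying φ_P(u) = u for all u ∈ E^0, φ_P(e) = e and φ_P(e*) = e* for all e ∈ E^1 \ {e_1, …, e_n}, and φ_P(e_i) = Σ_{k=1}^n e_k p_{ki}, φ_P(e_i*) = Σ_{k=1}^n p'_{ik} e_k* for all 1 ≤ i ≤ n. -/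

import Mathlib

/-- A directed graph `E = (E⁰, E¹, s, r)`. -/
structure DirGraph : Type 1 where
  V : Type
  E : Type
  s : E → V
  r : E → V

/-- Generators of the Leavitt path algebra: vertices, edges and ghost edges. -/
inductive LGen (G : DirGraph) : Type
  | vertex : G.V → LGen G
  | edge : G.E → LGen G
  | ghost : G.E → LGen G

/-- The defining relations of the Leavitt path algebra. -/
inductive LRel (K : Type) [Field K] (G : DirGraph) :
    FreeAlgebra K (LGen G) → FreeAlgebra K (LGen G) → Prop
  | vertexIdem (u : G.V) :
      LRel K G (FreeAlgebra.ι K (LGen.vertex u) * FreeAlgebra.ι K (LGen.vertex u))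
        (FreeAlgebra.ι K (LGen.vertex u))
  | vertexOrth (u u' : G.V) (h : u ≠ u') :
      LRel K G (FreeAlgebra.ι K (LGen.vertex u) * FreeAlgebra.ι K (LGen.vertex u')) 0
  | sourceEdge (e : G.E) :
      LRel K G (FreeAlgebra.ι K (LGen.vertex (G.s e)) * FreeAlgebra.ι K (LGen.edge e))
        (FreeAlgebra.ι K (LGen.edge e))
  | edgeRange (e : G.E) :
      LRel K G (FreeAlgebra.ι K (LGen.edge e) * FreeAlgebra.ι K (LGen.vertex (G.r e)))
        (FreeAlgebra.ι K (LGen.edge e))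
  | ghostSource (e : G.E) :
      LRel K G (FreeAlgebra.ι K (LGen.ghost e) * FreeAlgebra.ι K (LGen.vertex (G.s e)))
        (FreeAlgebra.ι K (LGen.ghost e))
  | rangeGhost (e : G.E) :
      LRel K G (FreeAlgebra.ι K (LGen.vertex (G.r e)) * FreeAlgebra.ι K (LGen.ghost e))
        (FreeAlgebra.ι K (LGen.ghost e))
  | ghostEdgeSame (e : G.E) :
      LRel K G (FreeAlgebra.ι K (LGen.ghost e) * FreeAlgebra.ι K (LGen.edge e))
        (FreeAlgebra.ι K (LGen.vertex (G.r e)))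
  | ghostEdgeNe (e f : G.E) (h : e ≠ f) :
      LRel K G (FreeAlgebra.ι K (LGen.ghost e) * FreeAlgebra.ι K (LGen.edge f)) 0
  | ck2 (u : G.V) (hfin : {e : G.E | G.s e = u}.Finite) (hne : {e : G.E | G.s e = u}.Nonempty) :
      LRel K G (FreeAlgebra.ι K (LGen.vertex u))
        (hfin.toFinset.sum fun e =>
          FreeAlgebra.ι K (LGen.edge e) * FreeAlgebra.ι K (LGen.ghost e))

/-- The Leavitt path algebra `L_K(E)` of a graph. -/
abbrev LPA (K : Type) [Field K] (G : DirGraph) : Type := RingQuot (LRel K G)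

noncomputable def vertexEl (K : Type) [Field K] (G : DirGraph) (u : G.V) : LPA K G :=
  RingQuot.mkAlgHom K (LRel K G) (FreeAlgebra.ι K (LGen.vertex u))

noncomputable def edgeEl (K : Type) [Field K] (G : DirGraph) (e : G.E) : LPA K G :=
  RingQuot.mkAlgHom K (LRel K G) (FreeAlgebra.ι K (LGen.edge e))

noncomputable def ghostEl (K : Type) [Field K] (G : DirGraph) (e : G.E) : LPA K G :=
  RingQuot.mkAlgHom K (LRel K G) (FreeAlgebra.ι K (LGen.ghost e))

/-- A list of edges is a (finite) path when ranges and sources match up. -/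
def IsPath (G : DirGraph) (l : List G.E) : Prop :=
  l.Chain' fun e f => G.r e = G.s f

noncomputable def edgeProd (K : Type) [Field K] (G : DirGraph) (l : List G.E) : LPA K G :=
  (l.map (edgeEl K G)).prod

/-- For a path `q`, the element `q* = e_k* ⋯ e_1*`. -/
noncomputable def ghostProd (K : Type) [Field K] (G : DirGraph) (l : List G.E) : LPA K G :=
  (l.reverse.map (ghostEl K G)).prod

/-- The degree `d` component of the ℤ-grading of `L_K(E)`:
the `K`-span of the elements `p q*` with `r(p) = r(q)` and `|p| - |q| = d`. -/
noncomputable def lpaComponent (K : Type) [Field K] (G : DirGraph) (d : ℤ) :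
    Submodule K (LPA K G) :=
  Submodule.span K {x : LPA K G | ∃ p q : List G.E, ∃ u : G.V,
    IsPath G p ∧ IsPath G q ∧ (p.length : ℤ) - (q.length : ℤ) = d ∧
    x = edgeProd K G p * vertexEl K G u * ghostProd K G q}

/-- Membership in the corner `w L_K(E) w`. -/
def InCorner (K : Type) [Field K] (G : DirGraph) (w : G.V) (x : LPA K G) : Prop :=
  vertexEl K G w * x * vertexEl K G w = x

/-- `(P, P')` is a pair consisting of an element of `GL_n(w L_K(E) w)` and its inverse:
all entries lie in the corner `w L_K(E) w`, and `P P' = P' P = w·I_n`,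
the identity matrix of `M_n(w L_K(E) w)`. -/
def IsCornerGLPair (K : Type) [Field K] (G : DirGraph) (w : G.V) {n : ℕ}
    (P P' : Matrix (Fin n) (Fin n) (LPA K G)) : Prop :=
  (∀ i j, InCorner K G w (P i j)) ∧ (∀ i j, InCorner K G w (P' i j)) ∧
    P * P' = Matrix.diagonal (fun _ => vertexEl K G w) ∧
    P' * P = Matrix.diagonal (fun _ => vertexEl K G w)

/-- The defining property of the endomorphism `φ_P` of `L_K(E)` attached to a matrix
`P` (with inverse `P'`) over the corner `w L_K(E) w`:  it fixes all vertices, fixes all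
edges and ghost edges other than `e_1, …, e_n`, and sends
`e_i ↦ Σ_k e_k p_{k i}` and `e_i* ↦ Σ_k p'_{i k} e_k*`. -/
def PhiProps (K : Type) [Field K] (G : DirGraph) {n : ℕ} (es : Fin n → G.E)
    (P P' : Matrix (Fin n) (Fin n) (LPA K G)) (φ : LPA K G →ₐ[K] LPA K G) : Prop :=
  (∀ u : G.V, φ (vertexEl K G u) = vertexEl K G u) ∧
  (∀ e : G.E, e ∉ Set.range es → φ (edgeEl K G e) = edgeEl K G e) ∧
  (∀ e : G.E, e ∉ Set.range es → φ (ghostEl K G e) = ghostEl K G e) ∧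
  (∀ i, φ (edgeEl K G (es i)) = ∑ k, edgeEl K G (es k) * P k i) ∧
  (∀ i, φ (ghostEl K G (es i)) = ∑ k, P' i k * ghostEl K G (es k))

section LPAAux

variable {K : Type} [Field K] {G : DirGraph}

attribute [local instance] Classical.propDecidable

private lemma lrel {a b : FreeAlgebra K (LGen G)} (h : LRel K G a b) :
    RingQuot.mkAlgHom K (LRel K G) a = RingQuot.mkAlgHom K (LRel K G) b :=
  RingQuot.mkAlgHom_rel K h

lemma lpa_vv (u : G.V) : vertexEl K G u * vertexEl K G u = vertexEl K G u := by
  simpa [vertexEl, map_mul] using lrel (LRel.vertexIdem (K := K) (G := G) u)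

lemma lpa_vv' {u u' : G.V} (h : u ≠ u') : vertexEl K G u * vertexEl K G u' = 0 := by
  simpa [vertexEl, map_mul] using lrel (LRel.vertexOrth (K := K) (G := G) u u' h)

lemma lpa_vE (e : G.E) : vertexEl K G (G.s e) * edgeEl K G e = edgeEl K G e := by
  simpa [vertexEl, edgeEl, map_mul] using lrel (LRel.sourceEdge (K := K) (G := G) e)

lemma lpa_Ev (e : G.E) : edgeEl K G e * vertexEl K G (G.r e) = edgeEl K G e := by
  simpa [vertexEl, edgeEl, map_mul] using lrel (LRel.edgeRange (K := K) (G := G) e)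

lemma lpa_Gv (e : G.E) : ghostEl K G e * vertexEl K G (G.s e) = ghostEl K G e := by
  simpa [vertexEl, ghostEl, map_mul] using lrel (LRel.ghostSource (K := K) (G := G) e)

lemma lpa_vG (e : G.E) : vertexEl K G (G.r e) * ghostEl K G e = ghostEl K G e := by
  simpa [vertexEl, ghostEl, map_mul] using lrel (LRel.rangeGhost (K := K) (G := G) e)

lemma lpa_GE (e : G.E) : ghostEl K G e * edgeEl K G e = vertexEl K G (G.r e) := by
  simpa [vertexEl, edgeEl, ghostEl, map_mul] using lrel (LRel.ghostEdgeSame (K := K) (G := G) e)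

lemma lpa_GE' {e f : G.E} (h : e ≠ f) : ghostEl K G e * edgeEl K G f = 0 := by
  simpa [edgeEl, ghostEl, map_mul] using lrel (LRel.ghostEdgeNe (K := K) (G := G) e f h)

lemma lpa_ck2 (u : G.V) (hfin : {e : G.E | G.s e = u}.Finite)
    (hne : {e : G.E | G.s e = u}.Nonempty) :
    vertexEl K G u = ∑ e ∈ hfin.toFinset, edgeEl K G e * ghostEl K G e := by
  simpa [vertexEl, edgeEl, ghostEl, map_mul, map_sum] using
    lrel (LRel.ck2 (K := K) (G := G) u hfin hne)

lemma vMulV (u u' : G.V) :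
    vertexEl K G u * vertexEl K G u' = if u = u' then vertexEl K G u else 0 := by
  split_ifs with h
  · subst h; exact lpa_vv u
  · exact lpa_vv' h

lemma vMulE (u : G.V) (e : G.E) :
    vertexEl K G u * edgeEl K G e = if u = G.s e then edgeEl K G e else 0 := by
  split_ifs with h
  · subst h; exact lpa_vE e
  · rw [← lpa_vE (K := K) e, ← mul_assoc, lpa_vv' h, zero_mul]

lemma eMulV (e : G.E) (u : G.V) :
    edgeEl K G e * vertexEl K G u = if u = G.r e then edgeEl K G e else 0 := by
  split_ifs with h
  · subst h; exact lpa_Ev e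
  · rw [← lpa_Ev (K := K) e, mul_assoc, lpa_vv' (Ne.symm h), mul_zero]

lemma gMulV (e : G.E) (u : G.V) :
    ghostEl K G e * vertexEl K G u = if u = G.s e then ghostEl K G e else 0 := by
  split_ifs with h
  · subst h; exact lpa_Gv e
  · rw [← lpa_Gv (K := K) e, mul_assoc, lpa_vv' (Ne.symm h), mul_zero]

lemma vMulG (u : G.V) (e : G.E) :
    vertexEl K G u * ghostEl K G e = if u = G.r e then ghostEl K G e else 0 := by
  split_ifs with h
  · subst h; exact lpa_vG e
  · rw [← lpa_vG (K := K) e, ← mul_assoc, lpa_vv' h, zero_mul]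

lemma gMulE (e f : G.E) :
    ghostEl K G e * edgeEl K G f = if e = f then vertexEl K G (G.r e) else 0 := by
  split_ifs with h
  · subst h; exact lpa_GE e
  · exact lpa_GE' h

lemma eMulE0 {e f : G.E} (h : G.r e ≠ G.s f) : edgeEl K G e * edgeEl K G f = 0 := by
  rw [← lpa_Ev (K := K) e, mul_assoc, vMulE]
  simp [h]

lemma gMulG0 {e f : G.E} (h : G.s e ≠ G.r f) : ghostEl K G e * ghostEl K G f = 0 := by
  rw [← lpa_Gv (K := K) e, mul_assoc, vMulG]
  simp [h]

/-! Cofactor versions. -/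

lemma vv_c (u u' : G.V) (x : LPA K G) :
    vertexEl K G u * (vertexEl K G u' * x) =
      if u = u' then vertexEl K G u * x else 0 := by
  rw [← mul_assoc, vMulV]; split_ifs <;> simp

lemma vE_c (u : G.V) (e : G.E) (x : LPA K G) :
    vertexEl K G u * (edgeEl K G e * x) =
      if u = G.s e then edgeEl K G e * x else 0 := by
  rw [← mul_assoc, vMulE]; split_ifs <;> simp

lemma eV_c (e : G.E) (u : G.V) (x : LPA K G) :
    edgeEl K G e * (vertexEl K G u * x) =
      if u = G.r e then edgeEl K G e * x else 0 := by
  rw [← mul_assoc, eMulV]; split_ifs <;> simp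

lemma gV_c (e : G.E) (u : G.V) (x : LPA K G) :
    ghostEl K G e * (vertexEl K G u * x) =
      if u = G.s e then ghostEl K G e * x else 0 := by
  rw [← mul_assoc, gMulV]; split_ifs <;> simp

lemma vG_c (u : G.V) (e : G.E) (x : LPA K G) :
    vertexEl K G u * (ghostEl K G e * x) =
      if u = G.r e then ghostEl K G e * x else 0 := by
  rw [← mul_assoc, vMulG]; split_ifs <;> simp

lemma gE_c (e f : G.E) (x : LPA K G) :
    ghostEl K G e * (edgeEl K G f * x) =
      if e = f then vertexEl K G (G.r e) * x else 0 := by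
  rw [← mul_assoc, gMulE]; split_ifs <;> simp

/-! List product lemmas. -/

@[simp] lemma ep_nil : edgeProd K G [] = 1 := rfl

@[simp] lemma gp_nil : ghostProd K G [] = 1 := rfl

@[simp] lemma ep_cons (a : G.E) (l : List G.E) :
    edgeProd K G (a :: l) = edgeEl K G a * edgeProd K G l := by
  simp [edgeProd]

@[simp] lemma gp_cons (a : G.E) (l : List G.E) :
    ghostProd K G (a :: l) = ghostProd K G l * ghostEl K G a := by
  simp [ghostProd]

lemma ep_append (l₁ l₂ : List G.E) :
    edgeProd K G (l₁ ++ l₂) = edgeProd K G l₁ * edgeProd K G l₂ := by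
  simp [edgeProd]

lemma gp_append (l₁ l₂ : List G.E) :
    ghostProd K G (l₁ ++ l₂) = ghostProd K G l₂ * ghostProd K G l₁ := by
  simp [ghostProd]

lemma ep_concat (l : List G.E) (a : G.E) :
    edgeProd K G (l ++ [a]) = edgeProd K G l * edgeEl K G a := by
  simp [ep_append]

lemma gp_concat (l : List G.E) (a : G.E) :
    ghostProd K G (l ++ [a]) = ghostEl K G a * ghostProd K G l := by
  simp [gp_append]

lemma isPath_tail {a : G.E} {l : List G.E} (h : IsPath G (a :: l)) : IsPath G l :=
  List.IsChain.tail h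

lemma mono_mem (p q : List G.E) (u : G.V) (hp : IsPath G p) (hq : IsPath G q)
    {d : ℤ} (hd : (p.length : ℤ) - q.length = d) :
    edgeProd K G p * vertexEl K G u * ghostProd K G q ∈ lpaComponent K G d :=
  Submodule.subset_span ⟨p, q, u, hp, hq, hd, rfl⟩

lemma mono_mem' (p q : List G.E) (u : G.V) (hp : IsPath G p) (hq : IsPath G q)
    {d : ℤ} (hd : (p.length : ℤ) - q.length = d) :
    edgeProd K G p * (vertexEl K G u * ghostProd K G q) ∈ lpaComponent K G d := by
  rw [← mul_assoc]; exact mono_mem p q u hp hq hd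

lemma path_append {l₁ l₂ : List G.E} (h₁ : IsPath G l₁) (h₂ : IsPath G l₂)
    (h : ∀ x ∈ l₁.getLast?, ∀ y ∈ l₂.head?, G.r x = G.s y) : IsPath G (l₁ ++ l₂) :=
  List.IsChain.append h₁ h₂ h

/-- The key reduction lemma: a product of two monomials (with a possible vertex or `1`
inserted in the middle) lies in the component of the appropriate degree. -/
lemma key_mul (p₁ : List G.E) (u₁ : G.V) (q₂ : List G.E) (u₂ : G.V)
    (hp₁ : IsPath G p₁) (hq₂ : IsPath G q₂) :
    ∀ q₁ : List G.E, IsPath G q₁ → ∀ p₂ : List G.E, IsPath G p₂ → ∀ m : LPA K G,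
      (m = 1 ∨ ∃ u, m = vertexEl K G u) →
      edgeProd K G p₁ * (vertexEl K G u₁ * (ghostProd K G q₁ *
        (m * (edgeProd K G p₂ * (vertexEl K G u₂ * ghostProd K G q₂)))))
        ∈ lpaComponent K G
          ((p₁.length : ℤ) - q₁.length + ((p₂.length : ℤ) - q₂.length)) := by
  have len_tac : ∀ l : List G.E, ((l.length : ℤ) = l.length) := fun _ => rfl
  have base : ∀ p₂ : List G.E, IsPath G p₂ →
      edgeProd K G p₁ * (vertexEl K G u₁ *
        (edgeProd K G p₂ * (vertexEl K G u₂ * ghostProd K G q₂)))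
        ∈ lpaComponent K G ((p₁.length : ℤ) + ((p₂.length : ℤ) - q₂.length)) := by
    intro p₂ hp₂
    rcases p₂ with _ | ⟨b, p₂'⟩
    · -- p₂ = []
      simp only [ep_nil, one_mul, vv_c]
      split_ifs with h
      · exact mono_mem' p₁ q₂ u₁ hp₁ hq₂ (by simp only [List.length_nil, Nat.cast_zero]; push_cast; ring)
      · simp only [mul_zero]
        exact Submodule.zero_mem _
    · -- p₂ = b :: p₂'
      simp only [ep_cons, mul_assoc, vE_c]
      split_ifs with h
      · -- u₁ = s b ; regroup as a single edge product
        have regroup :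
            edgeProd K G p₁ * (edgeEl K G b * (edgeProd K G p₂' *
              (vertexEl K G u₂ * ghostProd K G q₂))) =
            edgeProd K G (p₁ ++ b :: p₂') * (vertexEl K G u₂ * ghostProd K G q₂) := by
          rw [ep_append, ep_cons]
          rw [mul_assoc, mul_assoc]
        rw [regroup]
        rcases List.eq_nil_or_concat p₁ with rfl | ⟨p₁', l, rfl⟩
        all_goals try simp only [List.concat_eq_append] at hp₁ ⊢
        · exact mono_mem' _ q₂ u₂ (by simpa using hp₂) hq₂
            (by simp only [List.length_append, List.length_cons, List.length_nil]
                push_cast; ring)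
        · by_cases hj : G.r l = G.s b
          · refine mono_mem' _ q₂ u₂ (path_append hp₁ hp₂ ?_) hq₂
              (by simp only [List.length_append, List.length_cons, List.length_nil]
                  push_cast; ring)
            intro x hx y hy
            simp only [List.getLast?_append, List.getLast?_singleton] at hx
            simp only [List.head?_cons] at hy
            simp_all
          · rw [ep_append, ep_concat, ep_cons, mul_assoc (edgeProd K G p₁'),
              ← mul_assoc (edgeEl K G l), eMulE0 hj]
            simp only [zero_mul, mul_zero]
            exact Submodule.zero_mem _
      · -- u₁ ≠ s b
        simp only [mul_zero]
        exact Submodule.zero_mem _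
  intro q₁
  induction q₁ with
  | nil =>
    intro _ p₂ hp₂ m hm
    simp only [gp_nil, one_mul, List.length_nil, Nat.cast_zero, sub_zero]
    rcases hm with rfl | ⟨u, rfl⟩
    · simpa using base p₂ hp₂
    · rw [vv_c]
      split_ifs with h
      · exact base p₂ hp₂
      · simp only [mul_zero]
        exact Submodule.zero_mem _
  | cons a q₁' ih =>
    intro hq₁ p₂ hp₂ m hm
    have hq₁' : IsPath G q₁' := isPath_tail hq₁
    simp only [gp_cons, mul_assoc]
    -- first collapse `m` into the ghost `a`
    have hm' : ghostEl K G a * (m * (edgeProd K G p₂ * (vertexEl K G u₂ * ghostProd K G q₂)))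
        = ghostEl K G a * (edgeProd K G p₂ * (vertexEl K G u₂ * ghostProd K G q₂)) ∨
        ghostEl K G a * (m * (edgeProd K G p₂ * (vertexEl K G u₂ * ghostProd K G q₂))) = 0 := by
      rcases hm with rfl | ⟨u, rfl⟩
      · left; rw [one_mul]
      · rw [gV_c]
        split_ifs with h
        · left; rfl
        · right; rfl
    rcases hm' with h | h
    · rw [h]
      rcases p₂ with _ | ⟨b, p₂'⟩
      · -- p₂ = [] : merge the two ghost products
        simp only [ep_nil, one_mul, gV_c]
        split_ifs with h2
        · -- result is the monomial with ghost part  q₂ ++ a :: q₁'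
          have regroup : edgeProd K G p₁ * (vertexEl K G u₁ * (ghostProd K G q₁' *
                (ghostEl K G a * ghostProd K G q₂))) =
              edgeProd K G p₁ * (vertexEl K G u₁ * ghostProd K G (q₂ ++ a :: q₁')) := by
            rw [gp_append, gp_cons, mul_assoc]
          rw [regroup]
          rcases List.eq_nil_or_concat q₂ with rfl | ⟨q₂', l₂, rfl⟩
          all_goals try simp only [List.concat_eq_append] at hq₂ ⊢
          · exact mono_mem' p₁ _ u₁ hp₁ (by simpa using hq₁)
              (by simp only [List.length_append, List.length_cons, List.length_nil]
                  push_cast; ring)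
          · by_cases hj : G.r l₂ = G.s a
            · refine mono_mem' p₁ _ u₁ hp₁ (path_append hq₂ hq₁ ?_)
                (by simp only [List.length_append, List.length_cons, List.length_nil]
                    push_cast; ring)
              intro x hx y hy
              simp only [List.getLast?_append, List.getLast?_singleton] at hx
              simp only [List.head?_cons] at hy
              simp_all
            · rw [gp_append, gp_cons, gp_concat, mul_assoc (ghostProd K G q₁'),
                ← mul_assoc (ghostEl K G a), gMulG0 (fun hh => hj hh.symm)]
              simp only [zero_mul, mul_zero]
              exact Submodule.zero_mem _
        · simp only [mul_zero]
          exact Submodule.zero_mem _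
      · -- p₂ = b :: p₂'
        simp only [ep_cons, mul_assoc, gE_c]
        split_ifs with h2
        · subst h2
          have := ih hq₁' p₂' (isPath_tail hp₂) (vertexEl K G (G.r a)) (Or.inr ⟨_, rfl⟩)
          convert this using 2
          simp only [List.length_cons]
          push_cast; ring
        · simp only [mul_zero]
          exact Submodule.zero_mem _
    · rw [h]
      simp only [mul_zero]
      exact Submodule.zero_mem _

lemma compMul {d₁ d₂ : ℤ} {x y : LPA K G} (hx : x ∈ lpaComponent K G d₁)
    (hy : y ∈ lpaComponent K G d₂) : x * y ∈ lpaComponent K G (d₁ + d₂) := by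
  have hxy : x * y ∈ lpaComponent K G d₁ * lpaComponent K G d₂ :=
    Submodule.mul_mem_mul hx hy
  rw [lpaComponent, lpaComponent, Submodule.span_mul_span] at hxy
  refine Submodule.span_le.2 ?_ hxy
  rintro z ⟨x', ⟨p₁, q₁, u₁, hp₁, hq₁, hd₁, rfl⟩, y', ⟨p₂, q₂, u₂, hp₂, hq₂, hd₂, rfl⟩, rfl⟩
  rw [← hd₁, ← hd₂]
  have := key_mul (K := K) p₁ u₁ q₂ u₂ hp₁ hq₂ q₁ hq₁ p₂ hp₂ 1 (Or.inl rfl)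
  simpa [mul_assoc] using this

lemma vertex_mem (u : G.V) : vertexEl K G u ∈ lpaComponent K G 0 := by
  have := mono_mem (K := K) (G := G) [] [] u List.isChain_nil List.isChain_nil
    (d := 0) (by simp)
  simpa using this

lemma edge_mem (e : G.E) : edgeEl K G e ∈ lpaComponent K G 1 := by
  have := mono_mem (K := K) (G := G) [e] [] (G.r e) (List.isChain_singleton e) List.isChain_nil
    (d := 1) (by simp)
  simpa [lpa_Ev] using this

lemma ghost_mem (e : G.E) : ghostEl K G e ∈ lpaComponent K G (-1) := by
  have := mono_mem (K := K) (G := G) [] [e] (G.r e) List.isChain_nil (List.isChain_singleton e)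
    (d := -1) (by simp)
  simpa [lpa_vG] using this

/-- Any algebra endomorphism fixing the vertices and sending edges (resp. ghost edges) into
the degree-one (resp. minus-one) component is graded. -/
lemma phi_graded {φ : LPA K G →ₐ[K] LPA K G}
    (hv : ∀ u, φ (vertexEl K G u) = vertexEl K G u)
    (hE : ∀ e, φ (edgeEl K G e) ∈ lpaComponent K G 1)
    (hG : ∀ e, φ (ghostEl K G e) ∈ lpaComponent K G (-1)) :
    ∀ d : ℤ, ∀ x ∈ lpaComponent K G d, φ x ∈ lpaComponent K G d := by
  have hA : ∀ (q : List G.E) (u : G.V),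
      vertexEl K G u * φ (ghostProd K G q) ∈ lpaComponent K G (0 - (q.length : ℤ)) := by
    intro q
    induction q with
    | nil =>
      intro u
      simpa using vertex_mem (K := K) u
    | cons a q' ihq =>
      intro u
      rw [gp_cons, map_mul, ← mul_assoc]
      have h1 := compMul (ihq u) (hG a)
      convert h1 using 2
      simp only [List.length_cons]
      push_cast; ring
  have hB : ∀ (p : List G.E) (d' : ℤ) (X : LPA K G), X ∈ lpaComponent K G d' →
      φ (edgeProd K G p) * X ∈ lpaComponent K G ((p.length : ℤ) + d') := by
    intro p
    induction p with
    | nil =>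
      intro d' X hX
      simpa using hX
    | cons a p' ihp =>
      intro d' X hX
      rw [ep_cons, map_mul, mul_assoc]
      have := compMul (hE a) (ihp d' X hX)
      convert this using 2
      simp only [List.length_cons]
      push_cast; ring
  intro d x hx
  induction hx using Submodule.span_induction with
  | mem x h =>
    obtain ⟨p, q, u, hp, hq, hd, rfl⟩ := h
    rw [map_mul, map_mul, hv u, mul_assoc]
    have := hB p _ _ (hA q u)
    rw [← hd]
    convert this using 2
    ring
  | zero => simpa using Submodule.zero_mem _
  | add x y hx hy ihx ihy =>
    rw [map_add]
    exact Submodule.add_mem _ ihx ihy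
  | smul a x hx ihx =>
    rw [map_smul]
    exact Submodule.smul_mem _ a ihx

lemma corner_mul_left {w : G.V} {x : LPA K G} (h : InCorner K G w x) :
    vertexEl K G w * x = x := by
  conv_lhs => rw [← h]
  rw [← mul_assoc, ← mul_assoc, lpa_vv]
  exact h

lemma corner_mul_right {w : G.V} {x : LPA K G} (h : InCorner K G w x) :
    x * vertexEl K G w = x := by
  conv_lhs => rw [← h]
  rw [mul_assoc, lpa_vv]
  exact h

end LPAAux

section Construction

variable {K : Type} [Field K] {G : DirGraph} {n : ℕ}

attribute [local instance] Classical.propDecidable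

/-- The image of the generators under `φ_P`. -/
noncomputable def genMap (es : Fin n → G.E) (P P' : Matrix (Fin n) (Fin n) (LPA K G)) :
    LGen G → LPA K G
  | .vertex u => vertexEl K G u
  | .edge e =>
      if h : ∃ i, es i = e then ∑ k, edgeEl K G (es k) * P k (Classical.choose h)
      else edgeEl K G e
  | .ghost e =>
      if h : ∃ i, es i = e then ∑ k, P' (Classical.choose h) k * ghostEl K G (es k)
      else ghostEl K G e

variable (es : Fin n → G.E) (P P' : Matrix (Fin n) (Fin n) (LPA K G))

@[simp] lemma genMap_vertex (u : G.V) : genMap es P P' (.vertex u) = vertexEl K G u := rfl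

lemma genMap_edge_not {e : G.E} (h : ¬ ∃ i, es i = e) :
    genMap es P P' (.edge e) = edgeEl K G e := by
  simp only [genMap, dif_neg h]

lemma genMap_ghost_not {e : G.E} (h : ¬ ∃ i, es i = e) :
    genMap es P P' (.ghost e) = ghostEl K G e := by
  simp only [genMap, dif_neg h]

lemma genMap_edge_apply (hes : Function.Injective es) (i : Fin n) :
    genMap es P P' (.edge (es i)) = ∑ k, edgeEl K G (es k) * P k i := by
  have hex : ∃ j, es j = es i := ⟨i, rfl⟩
  have hch : Classical.choose hex = i := hes (Classical.choose_spec hex)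
  simp only [genMap, dif_pos hex, hch]

lemma genMap_ghost_apply (hes : Function.Injective es) (i : Fin n) :
    genMap es P P' (.ghost (es i)) = ∑ k, P' i k * ghostEl K G (es k) := by
  have hex : ∃ j, es j = es i := ⟨i, rfl⟩
  have hch : Classical.choose hex = i := hes (Classical.choose_spec hex)
  simp only [genMap, dif_pos hex, hch]

/-- The generator images respect all defining relations of the Leavitt path algebra. -/
lemma gen_rel {v w : G.V} (hes : Function.Injective es) (hs : ∀ i, G.s (es i) = v)
    (hr : ∀ i, G.r (es i) = w) (hP : IsCornerGLPair K G w P P') :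
    ∀ ⦃x y : FreeAlgebra K (LGen G)⦄, LRel K G x y →
      (FreeAlgebra.lift K (genMap es P P')) x = (FreeAlgebra.lift K (genMap es P P')) y := by
  obtain ⟨hPc, hP'c, hPP', hP'P⟩ := hP
  intro x y h
  induction h with
  | vertexIdem u =>
    simp only [map_mul, FreeAlgebra.lift_ι_apply, genMap_vertex]
    exact lpa_vv u
  | vertexOrth u u' h =>
    simp only [map_mul, map_zero, FreeAlgebra.lift_ι_apply, genMap_vertex]
    exact lpa_vv' h
  | sourceEdge e =>
    simp only [map_mul, FreeAlgebra.lift_ι_apply, genMap_vertex]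
    by_cases hrange : ∃ i, es i = e
    · obtain ⟨i, rfl⟩ := hrange
      rw [genMap_edge_apply es P P' hes i, Finset.mul_sum]
      refine Finset.sum_congr rfl fun k _ => ?_
      rw [← mul_assoc, hs i, ← hs k, lpa_vE]
    · rw [genMap_edge_not es P P' hrange, lpa_vE]
  | edgeRange e =>
    simp only [map_mul, FreeAlgebra.lift_ι_apply, genMap_vertex]
    by_cases hrange : ∃ i, es i = e
    · obtain ⟨i, rfl⟩ := hrange
      rw [genMap_edge_apply es P P' hes i, Finset.sum_mul]
      refine Finset.sum_congr rfl fun k _ => ?_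
      rw [mul_assoc, hr i, corner_mul_right (hPc k i)]
    · rw [genMap_edge_not es P P' hrange, lpa_Ev]
  | ghostSource e =>
    simp only [map_mul, FreeAlgebra.lift_ι_apply, genMap_vertex]
    by_cases hrange : ∃ i, es i = e
    · obtain ⟨i, rfl⟩ := hrange
      rw [genMap_ghost_apply es P P' hes i, Finset.sum_mul]
      refine Finset.sum_congr rfl fun k _ => ?_
      rw [mul_assoc, hs i, ← hs k, lpa_Gv]
    · rw [genMap_ghost_not es P P' hrange, lpa_Gv]
  | rangeGhost e =>
    simp only [map_mul, FreeAlgebra.lift_ι_apply, genMap_vertex]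
    by_cases hrange : ∃ i, es i = e
    · obtain ⟨i, rfl⟩ := hrange
      rw [genMap_ghost_apply es P P' hes i, Finset.mul_sum]
      refine Finset.sum_congr rfl fun k _ => ?_
      rw [← mul_assoc, hr i, corner_mul_left (hP'c i k)]
    · rw [genMap_ghost_not es P P' hrange, lpa_vG]
  | ghostEdgeSame e =>
    simp only [map_mul, FreeAlgebra.lift_ι_apply, genMap_vertex]
    by_cases hrange : ∃ i, es i = e
    · obtain ⟨i, rfl⟩ := hrange
      rw [genMap_ghost_apply es P P' hes i, genMap_edge_apply es P P' hes i, Finset.sum_mul]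
      have hterm : ∀ k : Fin n,
          (P' i k * ghostEl K G (es k)) * (∑ l, edgeEl K G (es l) * P l i)
            = P' i k * P k i := by
        intro k
        rw [Finset.mul_sum, Finset.sum_eq_single k]
        · rw [mul_assoc, ← mul_assoc (ghostEl K G (es k)), lpa_GE, hr k,
            corner_mul_left (hPc k i)]
        · intro l _ hlk
          rw [mul_assoc, ← mul_assoc (ghostEl K G (es k)),
            lpa_GE' (fun hh => hlk (hes hh.symm)), zero_mul, mul_zero]
        · intro hk; exact absurd (Finset.mem_univ k) hk
      calc ∑ k, (P' i k * ghostEl K G (es k)) * (∑ l, edgeEl K G (es l) * P l i)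
          = ∑ k, P' i k * P k i := Finset.sum_congr rfl fun k _ => hterm k
        _ = (P' * P) i i := (Matrix.mul_apply).symm
        _ = vertexEl K G (G.r (es i)) := by rw [hP'P, Matrix.diagonal_apply_eq, hr i]
    · rw [genMap_ghost_not es P P' hrange, genMap_edge_not es P P' hrange, lpa_GE]
  | ghostEdgeNe e f hef =>
    simp only [map_mul, map_zero, FreeAlgebra.lift_ι_apply]
    by_cases hrange : ∃ i, es i = e
    · obtain ⟨i, rfl⟩ := hrange
      by_cases hrange' : ∃ j, es j = f
      · obtain ⟨j, rfl⟩ := hrange'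
        have hij : i ≠ j := fun hh => hef (by rw [hh])
        rw [genMap_ghost_apply es P P' hes i, genMap_edge_apply es P P' hes j, Finset.sum_mul]
        have hterm : ∀ k : Fin n,
            (P' i k * ghostEl K G (es k)) * (∑ l, edgeEl K G (es l) * P l j)
              = P' i k * P k j := by
          intro k
          rw [Finset.mul_sum, Finset.sum_eq_single k]
          · rw [mul_assoc, ← mul_assoc (ghostEl K G (es k)), lpa_GE, hr k,
              corner_mul_left (hPc k j)]
          · intro l _ hlk
            rw [mul_assoc, ← mul_assoc (ghostEl K G (es k)),
              lpa_GE' (fun hh => hlk (hes hh.symm)), zero_mul, mul_zero]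
          · intro hk; exact absurd (Finset.mem_univ k) hk
        calc ∑ k, (P' i k * ghostEl K G (es k)) * (∑ l, edgeEl K G (es l) * P l j)
            = ∑ k, P' i k * P k j := Finset.sum_congr rfl fun k _ => hterm k
          _ = (P' * P) i j := (Matrix.mul_apply).symm
          _ = 0 := by rw [hP'P, Matrix.diagonal_apply_ne _ hij]
      · rw [genMap_ghost_apply es P P' hes i, genMap_edge_not es P P' hrange', Finset.sum_mul]
        refine Finset.sum_eq_zero fun k _ => ?_
        rw [mul_assoc, lpa_GE' (fun hh => hrange' ⟨k, hh⟩), mul_zero]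
    · by_cases hrange' : ∃ j, es j = f
      · obtain ⟨j, rfl⟩ := hrange'
        rw [genMap_ghost_not es P P' hrange, genMap_edge_apply es P P' hes j, Finset.mul_sum]
        refine Finset.sum_eq_zero fun l _ => ?_
        rw [← mul_assoc, lpa_GE' (fun hh => hrange ⟨l, hh.symm⟩), zero_mul]
      · rw [genMap_ghost_not es P P' hrange, genMap_edge_not es P P' hrange', lpa_GE' hef]
  | ck2 u hfin hne =>
    simp only [map_sum, map_mul, FreeAlgebra.lift_ι_apply, genMap_vertex]
    by_cases hu : u = v
    · subst hu
      have hR : Finset.image es Finset.univ ⊆ hfin.toFinset := by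
        intro e he
        rw [Finset.mem_image] at he
        obtain ⟨i, -, rfl⟩ := he
        rw [Set.Finite.mem_toFinset]
        exact hs i
      rw [← Finset.sum_sdiff hR]
      have h1 : ∑ e ∈ hfin.toFinset \ Finset.image es Finset.univ,
          genMap es P P' (LGen.edge e) * genMap es P P' (LGen.ghost e)
          = ∑ e ∈ hfin.toFinset \ Finset.image es Finset.univ,
              edgeEl K G e * ghostEl K G e := by
        refine Finset.sum_congr rfl fun e he => ?_
        rw [Finset.mem_sdiff, Finset.mem_image] at he
        have hnot : ¬ ∃ i, es i = e := fun ⟨i, hi⟩ => he.2 ⟨i, Finset.mem_univ i, hi⟩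
        rw [genMap_edge_not es P P' hnot, genMap_ghost_not es P P' hnot]
      have hinj : ∀ x ∈ Finset.univ (α := Fin n), ∀ y ∈ Finset.univ, es x = es y → x = y :=
        fun x _ y _ hxy => hes hxy
      have h2 : ∑ e ∈ Finset.image es Finset.univ,
          genMap es P P' (LGen.edge e) * genMap es P P' (LGen.ghost e)
          = ∑ e ∈ Finset.image es Finset.univ, edgeEl K G e * ghostEl K G e := by
        rw [Finset.sum_image hinj, Finset.sum_image hinj]
        calc ∑ i, genMap es P P' (LGen.edge (es i)) * genMap es P P' (LGen.ghost (es i))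
            = ∑ i, (∑ k, edgeEl K G (es k) * P k i) * (∑ l, P' i l * ghostEl K G (es l)) := by
              refine Finset.sum_congr rfl fun i _ => ?_
              rw [genMap_edge_apply es P P' hes i, genMap_ghost_apply es P P' hes i]
          _ = ∑ i, ∑ k, ∑ l, edgeEl K G (es k) * (P k i * (P' i l * ghostEl K G (es l))) := by
              refine Finset.sum_congr rfl fun i _ => ?_
              rw [Finset.sum_mul]
              refine Finset.sum_congr rfl fun k _ => ?_
              rw [Finset.mul_sum]
              refine Finset.sum_congr rfl fun l _ => ?_
              rw [mul_assoc]
          _ = ∑ k, ∑ l, edgeEl K G (es k) * ((∑ i, P k i * P' i l) * ghostEl K G (es l)) := by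
              rw [Finset.sum_comm]
              refine Finset.sum_congr rfl fun k _ => ?_
              rw [Finset.sum_comm]
              refine Finset.sum_congr rfl fun l _ => ?_
              rw [Finset.sum_mul, Finset.mul_sum]
              refine Finset.sum_congr rfl fun i _ => ?_
              rw [mul_assoc]
          _ = ∑ k, ∑ l, edgeEl K G (es k) * ((P * P') k l * ghostEl K G (es l)) := by
              simp only [Matrix.mul_apply]
          _ = ∑ k, edgeEl K G (es k) * ghostEl K G (es k) := by
              rw [hPP']
              refine Finset.sum_congr rfl fun k _ => ?_
              rw [Finset.sum_eq_single k]
              · rw [Matrix.diagonal_apply_eq, ← hr k, lpa_vG]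
              · intro l _ hlk
                rw [Matrix.diagonal_apply_ne _ (fun hh => hlk hh.symm), zero_mul, mul_zero]
              · intro hk; exact absurd (Finset.mem_univ k) hk
      rw [h1, h2, Finset.sum_sdiff hR]
      exact lpa_ck2 u hfin hne
    · rw [lpa_ck2 u hfin hne]
      refine Finset.sum_congr rfl fun e he => ?_
      rw [Set.Finite.mem_toFinset] at he
      have hnot : ¬ ∃ i, es i = e := by
        rintro ⟨i, rfl⟩
        exact hu ((hs i) ▸ he.symm)
      rw [genMap_edge_not es P P' hnot, genMap_ghost_not es P P' hnot]

/-- The endomorphism `φ_P` of the Leavitt path algebra. -/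
noncomputable def phiP {v w : G.V} (hes : Function.Injective es) (hs : ∀ i, G.s (es i) = v)
    (hr : ∀ i, G.r (es i) = w) (hP : IsCornerGLPair K G w P P') :
    LPA K G →ₐ[K] LPA K G :=
  RingQuot.liftAlgHom K ⟨FreeAlgebra.lift K (genMap es P P'), gen_rel es P P' hes hs hr hP⟩

lemma phiP_mk {v w : G.V} (hes : Function.Injective es) (hs : ∀ i, G.s (es i) = v)
    (hr : ∀ i, G.r (es i) = w) (hP : IsCornerGLPair K G w P P') (x : FreeAlgebra K (LGen G)) :
    phiP es P P' hes hs hr hP (RingQuot.mkAlgHom K (LRel K G) x) =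
      FreeAlgebra.lift K (genMap es P P') x :=
  RingQuot.liftAlgHom_mkAlgHom_apply K _ _ x

lemma phiP_props {v w : G.V} (hes : Function.Injective es) (hs : ∀ i, G.s (es i) = v)
    (hr : ∀ i, G.r (es i) = w) (hP : IsCornerGLPair K G w P P') :
    PhiProps K G es P P' (phiP es P P' hes hs hr hP) := by
  refine ⟨fun u => ?_, fun e he => ?_, fun e he => ?_, fun i => ?_, fun i => ?_⟩
  · rw [vertexEl, phiP_mk, FreeAlgebra.lift_ι_apply, genMap_vertex]
    exact rfl
  · rw [edgeEl, phiP_mk, FreeAlgebra.lift_ι_apply,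
      genMap_edge_not es P P' (by simpa [Set.mem_range] using he)]
    exact rfl
  · rw [ghostEl, phiP_mk, FreeAlgebra.lift_ι_apply,
      genMap_ghost_not es P P' (by simpa [Set.mem_range] using he)]
    exact rfl
  · rw [edgeEl, phiP_mk, FreeAlgebra.lift_ι_apply, genMap_edge_apply es P P' hes i]
  · rw [ghostEl, phiP_mk, FreeAlgebra.lift_ι_apply, genMap_ghost_apply es P P' hes i]

/-- Any two algebra endomorphisms with the defining properties agree. -/
lemma phi_unique {φ ψ : LPA K G →ₐ[K] LPA K G}
    (h₁ : PhiProps K G es P P' φ) (h₂ : PhiProps K G es P P' ψ) : φ = ψ := by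
  refine RingQuot.ringQuot_ext' K φ ψ (FreeAlgebra.hom_ext (funext fun g => ?_))
  obtain ⟨h₁v, h₁e, h₁g, h₁E, h₁G⟩ := h₁
  obtain ⟨h₂v, h₂e, h₂g, h₂E, h₂G⟩ := h₂
  cases g with
  | vertex u =>
    show φ (vertexEl K G u) = ψ (vertexEl K G u)
    rw [h₁v u, h₂v u]
  | edge e =>
    show φ (edgeEl K G e) = ψ (edgeEl K G e)
    by_cases hrange : e ∈ Set.range es
    · obtain ⟨i, rfl⟩ := hrange
      rw [h₁E i, h₂E i]
    · rw [h₁e e hrange, h₂e e hrange]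
  | ghost e =>
    show φ (ghostEl K G e) = ψ (ghostEl K G e)
    by_cases hrange : e ∈ Set.range es
    · obtain ⟨i, rfl⟩ := hrange
      rw [h₁G i, h₂G i]
    · rw [h₁g e hrange, h₂g e hrange]

end Construction

/-- If `P ∈ GL_n(w L_K(E)_0 w)` (all entries of `P` and `P'` lie in the
degree-zero component), then there is a unique *graded* `K`-algebra homomorphism
`φ_P : L_K(E) → L_K(E)` with the defining properties. -/
theorem stmt5 (K : Type) [Field K] (G : DirGraph) (n : ℕ) (hn : 0 < n)
    (v w : G.V) (es : Fin n → G.E) (hes : Function.Injective es)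
    (hs : ∀ i, G.s (es i) = v) (hr : ∀ i, G.r (es i) = w)
    (P P' : Matrix (Fin n) (Fin n) (LPA K G))
    (hP : IsCornerGLPair K G w P P')
    (hP0 : ∀ i j, P i j ∈ lpaComponent K G 0 ∧ P' i j ∈ lpaComponent K G 0) :
    ∃! φ : LPA K G →ₐ[K] LPA K G,
      (∀ d : ℤ, ∀ x ∈ lpaComponent K G d, φ x ∈ lpaComponent K G d) ∧
      PhiProps K G es P P' φ := by
  classical
  set φ := phiP es P P' hes hs hr hP with hφ
  have hprops : PhiProps K G es P P' φ := phiP_props es P P' hes hs hr hP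
  obtain ⟨hv, he, hg, hE, hG⟩ := hprops
  refine ⟨φ, ⟨?_, ⟨hv, he, hg, hE, hG⟩⟩, ?_⟩
  · -- gradedness
    refine phi_graded hv (fun e => ?_) (fun e => ?_)
    · by_cases hrange : e ∈ Set.range es
      · obtain ⟨i, rfl⟩ := hrange
        rw [hE i]
        refine Submodule.sum_mem _ fun k _ => ?_
        have := compMul (edge_mem (K := K) (es k)) (hP0 k i).1
        simpa using this
      · rw [he e hrange]
        exact edge_mem e
    · by_cases hrange : e ∈ Set.range es
      · obtain ⟨i, rfl⟩ := hrange
        rw [hG i]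
        refine Submodule.sum_mem _ fun k _ => ?_
        have := compMul (hP0 i k).2 (ghost_mem (K := K) (es k))
        simpa using this
      · rw [hg e hrange]
        exact ghost_mem e
  · -- uniqueness
    rintro ψ ⟨-, hψ⟩
    exact phi_unique es P P' hψ ⟨hv, he, hg, hE, hG⟩
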